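/- For every k ≥ 1, the Fourier partial sum of f at 0 of order q_k − 1 equals a_k · Σ_{m=1}^{p_k} 1/m, while the Fourier partial sum of f at 0 of order q_k + p_k equals 0. In particular, S_{q_k − 1}(f)(0) ≥ a_k ln p_k for all k. -/

import Mathlib

set_option maxHeartbeats 1000000

open Finset Real Filter

/-- The trigonometric polynomial `T_{p,q}(x) = Σ_{m=1}^p cos((q−m)x)/m − Σ_{m=1}^p cos((q+m)x)/m`. -/
noncomputable def T (p q : ℕ) (x : ℝ) : ℝ :=
  (∑ m ∈ Finset.Icc 1 p, Real.cos (((q : ℝ) - (m : ℝ)) * x) / (m : ℝ))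
    - ∑ m ∈ Finset.Icc 1 p, Real.cos (((q : ℝ) + (m : ℝ)) * x) / (m : ℝ)

/-- Fourier cosine coefficient `a_n(g) = (1/π) ∫_{-π}^{π} g(t) cos(nt) dt`. -/
noncomputable def fourierA (g : ℝ → ℝ) (n : ℕ) : ℝ :=
  (1 / Real.pi) * ∫ t in (-Real.pi)..Real.pi, g t * Real.cos ((n : ℝ) * t)

/-- Fourier sine coefficient `b_n(g) = (1/π) ∫_{-π}^{π} g(t) sin(nt) dt`. -/
noncomputable def fourierB (g : ℝ → ℝ) (n : ℕ) : ℝ :=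
  (1 / Real.pi) * ∫ t in (-Real.pi)..Real.pi, g t * Real.sin ((n : ℝ) * t)

/-- Fourier partial sum `S_N(g)(x) = a_0(g)/2 + Σ_{n=1}^N (a_n(g) cos(nx) + b_n(g) sin(nx))`. -/
noncomputable def fourierPartialSum (g : ℝ → ℝ) (N : ℕ) (x : ℝ) : ℝ :=
  fourierA g 0 / 2 +
    ∑ n ∈ Finset.Icc 1 N, (fourierA g n * Real.cos ((n : ℝ) * x)
      + fourierB g n * Real.sin ((n : ℝ) * x))

section Aux

open intervalIntegral MeasureTheory

lemma intC (z : ℤ) : ∫ t in (-π)..π, Real.cos (z * t) = if z = 0 then 2*π else 0 := by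
  rcases eq_or_ne z 0 with h | h
  · simp [h, two_mul]
  · have hz : (z:ℝ) ≠ 0 := Int.cast_ne_zero.mpr h
    rw [if_neg h]
    rw [intervalIntegral.integral_comp_mul_left Real.cos hz, integral_cos]
    have h1 : Real.sin (z * π) = 0 := Real.sin_int_mul_pi z
    have h2 : Real.sin (z * (-π)) = 0 := by
      rw [show (z:ℝ) * (-π) = -(z * π) by ring, Real.sin_neg, h1, neg_zero]
    rw [h1, h2]; simp

lemma ortho (j n : ℕ) : ∫ t in (-π)..π, Real.cos (j * t) * Real.cos (n * t)
    = if j = n then (if j = 0 then 2*π else π) else 0 := by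
  have key : ∀ t : ℝ, Real.cos (j * t) * Real.cos (n * t)
      = (Real.cos ((((j:ℤ) - n : ℤ)) * t) + Real.cos ((((j:ℤ) + n : ℤ)) * t)) / 2 := by
    intro t
    have := Real.cos_sub ((j:ℝ)*t) ((n:ℝ)*t)
    have h2 := Real.cos_add ((j:ℝ)*t) ((n:ℝ)*t)
    push_cast
    rw [show ((j:ℝ) - n) * t = (j:ℝ)*t - (n:ℝ)*t by ring,
        show ((j:ℝ) + n) * t = (j:ℝ)*t + (n:ℝ)*t by ring, this, h2]
    ring
  simp_rw [key]
  have i1 : ∀ c : ℤ, IntervalIntegrable (fun t : ℝ => Real.cos (c * t)) volume (-π) π := by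
    intro c
    exact (Real.continuous_cos.comp (continuous_const.mul continuous_id)).intervalIntegrable _ _
  rw [intervalIntegral.integral_div, intervalIntegral.integral_add (i1 _) (i1 _), intC, intC]
  rcases eq_or_ne j n with h | h
  · subst h
    rcases eq_or_ne j 0 with h0 | h0
    · simp [h0]; try ring
    · have : ((j:ℤ) + j) ≠ 0 := by positivity
      simp [h0, this]
      try ring
  · have h1 : ((j:ℤ) - n) ≠ 0 := by
      simp only [sub_ne_zero]; exact_mod_cast h
    rcases eq_or_ne ((j:ℤ) + n) 0 with h2 | h2
    · have hj : j = 0 := by omega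
      have hn : n = 0 := by omega
      exact absurd (hj.trans hn.symm) h
    · simp [h1, h2, h]

lemma ortho' (j n : ℕ) (hj : j ≠ 0) : ∫ t in (-π)..π, Real.cos (j * t) * Real.cos (n * t)
    = if j = n then π else 0 := by
  rw [ortho, if_neg hj]

lemma T_eq (p q : ℕ) (hq : p < q) (t : ℝ) : T p q t =
    ∑ m ∈ Icc 1 p, (Real.cos (((q - m : ℕ) : ℝ) * t) - Real.cos (((q + m : ℕ) : ℝ) * t)) / (m : ℝ) := by
  unfold T
  rw [← Finset.sum_sub_distrib]
  refine Finset.sum_congr rfl fun m hm => ?_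
  have hm' : m ≤ q := le_of_lt (lt_of_le_of_lt (Finset.mem_Icc.mp hm).2 hq)
  rw [Nat.cast_sub hm', Nat.cast_add, sub_div]

@[fun_prop]
lemma contT (p q : ℕ) : Continuous (T p q) := by
  unfold T
  apply Continuous.sub <;> exact continuous_finset_sum _ fun m _ =>
    ((Real.continuous_cos.comp (continuous_const.mul continuous_id)).div_const _)

lemma intTcos (p q n : ℕ) (hp : 1 ≤ p) (hq : p < q) :
    ∫ t in (-π)..π, T p q t * Real.cos (n * t)
      = π * ((∑ m ∈ Icc 1 p, if q - m = n then 1/(m:ℝ) else 0)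
             - ∑ m ∈ Icc 1 p, if q + m = n then 1/(m:ℝ) else 0) := by
  have hInt : ∀ c : ℕ, IntervalIntegrable (fun t : ℝ => Real.cos (c * t) * Real.cos (n * t)) volume (-π) π := by
    intro c
    exact ((Real.continuous_cos.comp (continuous_const.mul continuous_id)).mul
      (Real.continuous_cos.comp (continuous_const.mul continuous_id))).intervalIntegrable _ _
  have step1 : ∫ t in (-π)..π, T p q t * Real.cos (n * t)
      = ∑ m ∈ Icc 1 p, ∫ t in (-π)..π,
        ((Real.cos (((q - m : ℕ):ℝ) * t) - Real.cos (((q + m : ℕ):ℝ) * t)) / m) * Real.cos (n * t) := by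
    rw [intervalIntegral.integral_congr (g := fun t => ∑ m ∈ Icc 1 p,
        ((Real.cos (((q - m : ℕ):ℝ) * t) - Real.cos (((q + m : ℕ):ℝ) * t)) / m) * Real.cos (n * t))
        (fun t _ => by rw [T_eq p q hq t, Finset.sum_mul])]
    exact intervalIntegral.integral_finset_sum fun m hm =>
      (Continuous.intervalIntegrable (by fun_prop) _ _)
  rw [step1]
  have step2 : ∀ m ∈ Icc 1 p, (∫ t in (-π)..π,
      ((Real.cos (((q - m : ℕ):ℝ) * t) - Real.cos (((q + m : ℕ):ℝ) * t)) / m) * Real.cos (n * t))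
      = π * ((if q - m = n then 1/(m:ℝ) else 0) - (if q + m = n then 1/(m:ℝ) else 0)) := by
    intro m hm
    obtain ⟨hm1, hm2⟩ := Finset.mem_Icc.mp hm
    have e : ∀ t : ℝ, ((Real.cos (((q - m : ℕ):ℝ) * t) - Real.cos (((q + m : ℕ):ℝ) * t)) / m) * Real.cos (n * t)
        = (Real.cos (((q - m : ℕ):ℝ) * t) * Real.cos (n * t)) / m
          - (Real.cos (((q + m : ℕ):ℝ) * t) * Real.cos (n * t)) / m := by
      intro t; ring
    simp_rw [e]
    rw [intervalIntegral.integral_sub (Continuous.intervalIntegrable (by fun_prop) _ _)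
      (Continuous.intervalIntegrable (by fun_prop) _ _),
      intervalIntegral.integral_div, intervalIntegral.integral_div,
      ortho' (q - m) n (by omega), ortho' (q + m) n (by omega)]
    have hm0 : (m : ℝ) ≠ 0 := Nat.cast_ne_zero.mpr (by omega)
    split_ifs <;> field_simp <;> ring
  rw [Finset.sum_congr rfl step2, ← Finset.mul_sum, Finset.sum_sub_distrib]

lemma sum_inv_sq_le (P : ℕ) : ∑ m ∈ Icc 1 P, (1:ℝ)/(m:ℝ)^2 ≤ 2 := by
  have key : ∀ P : ℕ, 1 ≤ P → ∑ m ∈ Icc 1 P, (1:ℝ)/(m:ℝ)^2 ≤ 2 - 1/(P:ℝ) := by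
    intro P hP
    induction P, hP using Nat.le_induction with
    | base => norm_num
    | succ n hn ih =>
      rw [Finset.sum_Icc_succ_top (by omega : 1 ≤ n + 1)]
      have h1 : (0:ℝ) < n := by exact_mod_cast hn
      have h2 : (0:ℝ) < (n:ℝ) + 1 := by linarith
      have : (1:ℝ)/((n:ℕ)+1:ℝ)^2 ≤ 1/(n:ℝ) - 1/((n:ℝ)+1) := by
        rw [div_sub_div _ _ (ne_of_gt h1) (ne_of_gt h2)]
        rw [div_le_div_iff₀ (by positivity) (by positivity)]
        nlinarith
      push_cast at this ⊢
      linarith [ih]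
  rcases Nat.eq_zero_or_pos P with h | h
  · simp [h]
  · have h1 : (0:ℝ) < P := by exact_mod_cast h
    have h2 : 0 < 1/(P:ℝ) := by positivity
    linarith [key P (by omega)]

lemma intT2 (p q : ℕ) (hq : p < q) :
    ∫ t in (-π)..π, (T p q t)^2 = 2*π * ∑ m ∈ Icc 1 p, (1:ℝ)/(m:ℝ)^2 := by
  have key : ∀ m ∈ Icc 1 p, ∀ m' ∈ Icc 1 p,
      (∫ t in (-π)..π, ((Real.cos (((q - m : ℕ):ℝ) * t) - Real.cos (((q + m : ℕ):ℝ) * t)) / m) *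
        ((Real.cos (((q - m' : ℕ):ℝ) * t) - Real.cos (((q + m' : ℕ):ℝ) * t)) / m'))
      = if m' = m then 2*π/(m:ℝ)^2 else 0 := by
    intro m hm m' hm'
    obtain ⟨h1, h2⟩ := Finset.mem_Icc.mp hm
    obtain ⟨h1', h2'⟩ := Finset.mem_Icc.mp hm'
    have e : ∀ t : ℝ, ((Real.cos (((q - m : ℕ):ℝ) * t) - Real.cos (((q + m : ℕ):ℝ) * t)) / m) *
        ((Real.cos (((q - m' : ℕ):ℝ) * t) - Real.cos (((q + m' : ℕ):ℝ) * t)) / m')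
        = (Real.cos (((q - m : ℕ):ℝ) * t) * Real.cos (((q - m' : ℕ):ℝ) * t)) / (m*m')
          - (Real.cos (((q - m : ℕ):ℝ) * t) * Real.cos (((q + m' : ℕ):ℝ) * t)) / (m*m')
          - ((Real.cos (((q + m : ℕ):ℝ) * t) * Real.cos (((q - m' : ℕ):ℝ) * t)) / (m*m')
          - (Real.cos (((q + m : ℕ):ℝ) * t) * Real.cos (((q + m' : ℕ):ℝ) * t)) / (m*m')) := by
      intro t; ring
    simp_rw [e]
    rw [intervalIntegral.integral_sub
        ((Continuous.intervalIntegrable (by fun_prop) _ _).sub (Continuous.intervalIntegrable (by fun_prop) _ _))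
        ((Continuous.intervalIntegrable (by fun_prop) _ _).sub (Continuous.intervalIntegrable (by fun_prop) _ _)),
      intervalIntegral.integral_sub (Continuous.intervalIntegrable (by fun_prop) _ _)
        (Continuous.intervalIntegrable (by fun_prop) _ _),
      intervalIntegral.integral_sub (Continuous.intervalIntegrable (by fun_prop) _ _)
        (Continuous.intervalIntegrable (by fun_prop) _ _),
      intervalIntegral.integral_div, intervalIntegral.integral_div,
      intervalIntegral.integral_div, intervalIntegral.integral_div,
      ortho' _ _ (by omega), ortho' _ _ (by omega), ortho' _ _ (by omega), ortho' _ _ (by omega)]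
    have c1 : (q - m = q - m') ↔ (m' = m) := by omega
    have c2 : ¬ (q - m = q + m') := by omega
    have c3 : ¬ (q + m = q - m') := by omega
    have c4 : (q + m = q + m') ↔ (m' = m) := by omega
    rcases eq_or_ne m' m with h | h
    · subst h
      rw [if_pos (c1.mpr rfl), if_neg c2, if_neg c3, if_pos (c4.mpr rfl), if_pos rfl]
      have : (m':ℝ) ≠ 0 := Nat.cast_ne_zero.mpr (by omega)
      field_simp
      ring
    · rw [if_neg (fun hc => h (c1.mp hc)), if_neg c2, if_neg c3, if_neg (fun hc => h (c4.mp hc)), if_neg h]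
      norm_num
  have step1 : ∫ t in (-π)..π, (T p q t)^2
      = ∑ m ∈ Icc 1 p, ∑ m' ∈ Icc 1 p, ∫ t in (-π)..π,
        ((Real.cos (((q - m : ℕ):ℝ) * t) - Real.cos (((q + m : ℕ):ℝ) * t)) / m) *
        ((Real.cos (((q - m' : ℕ):ℝ) * t) - Real.cos (((q + m' : ℕ):ℝ) * t)) / m') := by
    rw [intervalIntegral.integral_congr (g := fun t => ∑ m ∈ Icc 1 p, ∑ m' ∈ Icc 1 p,
        ((Real.cos (((q - m : ℕ):ℝ) * t) - Real.cos (((q + m : ℕ):ℝ) * t)) / m) *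
        ((Real.cos (((q - m' : ℕ):ℝ) * t) - Real.cos (((q + m' : ℕ):ℝ) * t)) / m'))
        (fun t _ => by rw [sq, T_eq p q hq t, Finset.sum_mul_sum])]
    rw [intervalIntegral.integral_finset_sum (fun m hm => Continuous.intervalIntegrable (by fun_prop) _ _)]
    exact Finset.sum_congr rfl fun m hm => intervalIntegral.integral_finset_sum
      (fun m' hm' => Continuous.intervalIntegrable (by fun_prop) _ _)
  rw [step1]
  rw [Finset.sum_congr rfl (fun m hm => Finset.sum_congr rfl (fun m' hm' => key m hm m' hm'))]
  rw [Finset.sum_congr rfl (fun m hm => Finset.sum_ite_eq' (Icc 1 p) m (fun _ => 2*π/(m:ℝ)^2))]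
  rw [Finset.sum_congr rfl (fun m hm => if_pos hm)]
  rw [Finset.mul_sum]
  exact Finset.sum_congr rfl fun m hm => by rw [div_eq_mul_one_div]

/-- The Fourier cosine coefficient pattern of a single block. -/
noncomputable def Cf (p q n : ℕ) : ℝ :=
  (∑ m ∈ Icc 1 p, if q - m = n then 1/(m:ℝ) else 0)
    - ∑ m ∈ Icc 1 p, if q + m = n then 1/(m:ℝ) else 0

lemma log_le_sum (P : ℕ) (hP : 1 ≤ P) : Real.log P ≤ ∑ m ∈ Icc 1 P, (1:ℝ)/(m:ℝ) := by
  have h := log_add_one_le_harmonic (P-1)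
  have e : (P - 1) + 1 = P := by omega
  rw [e] at h
  have h2 : (harmonic (P-1) : ℝ) ≤ (harmonic P : ℝ) := by
    have h3 : harmonic (P-1) ≤ harmonic ((P-1) + 1) := by
      rw [harmonic_succ]
      have : (0:ℚ) ≤ (↑((P-1) + 1))⁻¹ := by positivity
      linarith
    rw [e] at h3
    exact_mod_cast h3
  calc Real.log P ≤ (harmonic (P-1) : ℝ) := h
    _ ≤ (harmonic P : ℝ) := h2
    _ = ∑ m ∈ Icc 1 P, (1:ℝ)/(m:ℝ) := by
        rw [harmonic_eq_sum_Icc]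
        push_cast
        exact Finset.sum_congr rfl fun m hm => (one_div _).symm

end Aux

/-- For every `k`, `S_{q_k−1}(f)(0) = a_k Σ_{m=1}^{p_k} 1/m` and `S_{q_k+p_k}(f)(0) = 0`;
in particular `S_{q_k−1}(f)(0) ≥ a_k ln p_k`. -/
theorem stmt_11 (p q : ℕ → ℕ) (a : ℕ → ℝ)
    (hpq : ∀ k, 1 < p k ∧ p k < q k)
    (hsep : ∀ k, q k + p k < q (k + 1) - p (k + 1))
    (hapos : ∀ k, 0 < a k)
    (hsum : Summable a)
    (hliminf : 0 < Filter.liminf (fun k => a k * Real.log (p k)) Filter.atTop)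
    (f : ℝ → ℝ) (hf : ∀ x, f x = ∑' k, a k * T (p k) (q k) x) :
    ∀ k : ℕ,
      fourierPartialSum f (q k - 1) 0 = a k * ∑ m ∈ Finset.Icc 1 (p k), (1 : ℝ) / (m : ℝ)
      ∧ fourierPartialSum f (q k + p k) 0 = 0
      ∧ a k * Real.log (p k) ≤ fourierPartialSum f (q k - 1) 0 := by
  intro k0
  have hpi : (0:ℝ) < π := Real.pi_pos
  have hle : -π ≤ π := by linarith
  set s : Set ℝ := Set.Ioc (-π) π with hs
  -- chain of separated blocks
  have chain : ∀ j k : ℕ, j < k → q j + p j < q k - p k := by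
    intro j k hjk
    induction k with
    | zero => omega
    | succ k ih =>
      rcases Nat.lt_succ_iff_lt_or_eq.mp hjk with h | h
      · have h1 := ih h
        have h2 := hsep k
        have h3 := (hpq k).1
        have h4 := (hpq k).2
        omega
      · subst h; exact hsep j
  -- integrability
  have hint : ∀ (n : ℕ) (k : ℕ),
      MeasureTheory.IntegrableOn (fun t => a k * T (p k) (q k) t * Real.cos ((n:ℝ)*t)) s
        MeasureTheory.volume :=
    fun n k => Continuous.integrableOn_Ioc (by fun_prop)
  -- L¹ bound on T
  have habs : ∀ k : ℕ, ∫ t in s, |T (p k) (q k) t| ≤ 6*π := by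
    intro k
    have h1 : MeasureTheory.IntegrableOn (fun t => |T (p k) (q k) t|) s MeasureTheory.volume :=
      Continuous.integrableOn_Ioc (by fun_prop)
    have h2 : MeasureTheory.IntegrableOn (fun t => 1 + (T (p k) (q k) t)^2) s MeasureTheory.volume :=
      Continuous.integrableOn_Ioc (by fun_prop)
    have mono : ∫ t in s, |T (p k) (q k) t| ≤ ∫ t in s, (1 + (T (p k) (q k) t)^2) := by
      refine MeasureTheory.setIntegral_mono h1 h2 (fun t => ?_)
      nlinarith [sq_nonneg (|T (p k) (q k) t| - 1), sq_abs (T (p k) (q k) t),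
        abs_nonneg (T (p k) (q k) t)]
    have e1 : ∫ t in s, (1 + (T (p k) (q k) t)^2)
        = 2*π + ∫ t in s, (T (p k) (q k) t)^2 := by
      rw [MeasureTheory.integral_add ((MeasureTheory.integrableOn_const_iff (C := (1:ℝ))).mpr
          (Or.inr (by rw [Real.volume_Ioc]; exact ENNReal.ofReal_lt_top)))
          (Continuous.integrableOn_Ioc (by fun_prop))]
      congr 1
      rw [MeasureTheory.setIntegral_const, Real.volume_real_Ioc_of_le (by linarith), smul_eq_mul, mul_one]
      ring
    have e2 : ∫ t in s, (T (p k) (q k) t)^2 ≤ 4*π := by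
      rw [hs, ← intervalIntegral.integral_of_le hle, intT2 _ _ (hpq k).2]
      have := sum_inv_sq_le (p k)
      nlinarith
    linarith
    -- norm summability
  have hnorm : ∀ n : ℕ, Summable (fun k => ∫ t in s, ‖a k * T (p k) (q k) t * Real.cos ((n:ℝ)*t)‖) := by
    intro n
    refine Summable.of_nonneg_of_le
      (fun k => MeasureTheory.integral_nonneg (fun t => norm_nonneg _)) (fun k => ?_)
      (hsum.mul_right (6*π))
    have hmono : ∫ t in s, ‖a k * T (p k) (q k) t * Real.cos ((n:ℝ)*t)‖
        ≤ ∫ t in s, a k * |T (p k) (q k) t| := by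
      refine MeasureTheory.setIntegral_mono ((hint n k).norm)
        (Continuous.integrableOn_Ioc (by fun_prop)) (fun t => ?_)
      have hb : ‖a k * T (p k) (q k) t * Real.cos ((n:ℝ)*t)‖
          = |a k| * |T (p k) (q k) t| * |Real.cos ((n:ℝ)*t)| := by
        rw [Real.norm_eq_abs, abs_mul, abs_mul]
      rw [hb, abs_of_pos (hapos k)]
      have h1 : |Real.cos ((n:ℝ)*t)| ≤ 1 := Real.abs_cos_le_one _
      have h2 : 0 ≤ a k * |T (p k) (q k) t| := mul_nonneg (le_of_lt (hapos k)) (abs_nonneg _)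
      calc a k * |T (p k) (q k) t| * |Real.cos ((n:ℝ)*t)| ≤ a k * |T (p k) (q k) t| * 1 :=
            mul_le_mul_of_nonneg_left h1 h2
        _ = a k * |T (p k) (q k) t| := mul_one _
    calc ∫ t in s, ‖a k * T (p k) (q k) t * Real.cos ((n:ℝ)*t)‖
        ≤ ∫ t in s, a k * |T (p k) (q k) t| := hmono
      _ = a k * ∫ t in s, |T (p k) (q k) t| := MeasureTheory.integral_const_mul _ _
      _ ≤ a k * (6*π) := mul_le_mul_of_nonneg_left (habs k) (le_of_lt (hapos k))
  -- value of each block integral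
  have hval : ∀ (n k : ℕ), ∫ t in s, a k * T (p k) (q k) t * Real.cos ((n:ℝ)*t)
      = a k * (π * Cf (p k) (q k) n) := by
    intro n k
    rw [hs, ← intervalIntegral.integral_of_le hle]
    have e : ∀ t : ℝ, a k * T (p k) (q k) t * Real.cos ((n:ℝ)*t)
        = a k * (T (p k) (q k) t * Real.cos ((n:ℝ)*t)) := fun t => by ring
    simp_rw [e]
    rw [intervalIntegral.integral_const_mul, intTcos _ _ _ (le_of_lt (hpq k).1) (hpq k).2]
    rfl
  -- HasSum for each coefficient
  have hHS : ∀ n : ℕ, HasSum (fun k => a k * (π * Cf (p k) (q k) n))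
      (∫ t in s, f t * Real.cos ((n:ℝ)*t)) := by
    intro n
    have h := MeasureTheory.hasSum_integral_of_summable_integral_norm
      (μ := MeasureTheory.volume.restrict s)
      (F := fun k t => a k * T (p k) (q k) t * Real.cos ((n:ℝ)*t))
      (fun k => hint n k) (hnorm n)
    have funeq : (fun t => ∑' k, a k * T (p k) (q k) t * Real.cos ((n:ℝ)*t))
        = fun t => f t * Real.cos ((n:ℝ)*t) := by
      funext t
      rw [tsum_mul_right, ← hf t]
    rw [funeq] at h
    have funeq2 : (fun k => ∫ t in s, a k * T (p k) (q k) t * Real.cos ((n:ℝ)*t))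
        = fun k => a k * (π * Cf (p k) (q k) n) := funext fun k => hval n k
    rwa [funeq2] at h
  -- fourierA f n as a tsum
  have hA : ∀ n : ℕ, fourierA f n = ∑' k, a k * Cf (p k) (q k) n := by
    intro n
    unfold fourierA
    rw [intervalIntegral.integral_of_le hle, ← hs, ← (hHS n).tsum_eq]
    have e : ∀ k : ℕ, a k * (π * Cf (p k) (q k) n) = π * (a k * Cf (p k) (q k) n) :=
      fun k => by ring
    simp_rw [e]
    rw [tsum_mul_left]
    field_simp
  have hAsummable : ∀ n : ℕ, Summable (fun k => a k * Cf (p k) (q k) n) := by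
    intro n
    have h1 := (hHS n).summable
    have h2 := h1.div_const π
    have e : ∀ k : ℕ, a k * (π * Cf (p k) (q k) n) / π = a k * Cf (p k) (q k) n := by
      intro k; field_simp
    simpa [e] using h2
  -- fourierA f 0 = 0
  have hCf0 : ∀ k : ℕ, Cf (p k) (q k) 0 = 0 := by
    intro k
    have h1 := (hpq k).1
    have h2 := (hpq k).2
    unfold Cf
    rw [Finset.sum_congr rfl (fun m hm => if_neg (by
        obtain ⟨hma, hmb⟩ := Finset.mem_Icc.mp hm; omega)),
      Finset.sum_congr rfl (fun m hm => if_neg (by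
        obtain ⟨hma, hmb⟩ := Finset.mem_Icc.mp hm; omega))]
    simp
  have hA0 : fourierA f 0 = 0 := by
    rw [hA 0]
    rw [tsum_congr (fun k => by rw [hCf0 k, mul_zero])]
    exact tsum_zero
  -- partial sums at 0
  have hPS : ∀ N : ℕ, fourierPartialSum f N 0 = ∑ n ∈ Finset.Icc 1 N, fourierA f n := by
    intro N
    unfold fourierPartialSum
    rw [hA0]
    simp [Real.cos_zero, Real.sin_zero]
  -- sum over a range of fourier coefficients
  have hsumA : ∀ N : ℕ, ∑ n ∈ Finset.Icc 1 N, fourierA f n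
      = ∑' k, a k * ∑ n ∈ Finset.Icc 1 N, Cf (p k) (q k) n := by
    intro N
    rw [Finset.sum_congr rfl (fun n _ => hA n)]
    rw [← Summable.tsum_finsetSum (fun n _ => hAsummable n)]
    exact tsum_congr fun k => (Finset.mul_sum _ _ _).symm
  -- block sums
  have hblock : ∀ (k N : ℕ), ∑ n ∈ Finset.Icc 1 N, Cf (p k) (q k) n
      = (∑ m ∈ Finset.Icc 1 (p k), if q k - m ∈ Finset.Icc 1 N then 1/(m:ℝ) else 0)
        - ∑ m ∈ Finset.Icc 1 (p k), if q k + m ∈ Finset.Icc 1 N then 1/(m:ℝ) else 0 := by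
    intro k N
    unfold Cf
    rw [Finset.sum_sub_distrib, Finset.sum_comm, Finset.sum_comm (s := Finset.Icc 1 N)]
    congr 1
    · exact Finset.sum_congr rfl fun m _ => Finset.sum_ite_eq (Finset.Icc 1 N) (q k - m) (fun _ => 1/(m:ℝ))
    · exact Finset.sum_congr rfl fun m _ => Finset.sum_ite_eq (Finset.Icc 1 N) (q k + m) (fun _ => 1/(m:ℝ))
  -- evaluation of block sums at N = q k0 - 1
  have hD1 : ∀ k : ℕ, ∑ n ∈ Finset.Icc 1 (q k0 - 1), Cf (p k) (q k) n
      = if k = k0 then (∑ m ∈ Finset.Icc 1 (p k0), 1/(m:ℝ)) else 0 := by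
    intro k
    have hk := hpq k
    have hk0 := hpq k0
    rw [hblock]
    rcases lt_trichotomy k k0 with h | h | h
    · have hc := chain k k0 h
      rw [if_neg (by omega)]
      rw [Finset.sum_congr rfl (fun m hm => if_pos (by
          obtain ⟨hma, hmb⟩ := Finset.mem_Icc.mp hm
          rw [Finset.mem_Icc]; omega)),
        Finset.sum_congr rfl (fun m hm => if_pos (by
          obtain ⟨hma, hmb⟩ := Finset.mem_Icc.mp hm
          rw [Finset.mem_Icc]; omega))]
      exact sub_self _
    · subst h
      rw [if_pos rfl]
      rw [Finset.sum_congr rfl (fun m hm => if_pos (by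
          obtain ⟨hma, hmb⟩ := Finset.mem_Icc.mp hm
          rw [Finset.mem_Icc]; omega)),
        Finset.sum_congr rfl (fun m hm => if_neg (by
          obtain ⟨hma, hmb⟩ := Finset.mem_Icc.mp hm
          rw [Finset.mem_Icc]; omega))]
      simp
    · have hc := chain k0 k h
      rw [if_neg (by omega)]
      rw [Finset.sum_congr rfl (fun m hm => if_neg (by
          obtain ⟨hma, hmb⟩ := Finset.mem_Icc.mp hm
          rw [Finset.mem_Icc]; omega)),
        Finset.sum_congr rfl (fun m hm => if_neg (by
          obtain ⟨hma, hmb⟩ := Finset.mem_Icc.mp hm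
          rw [Finset.mem_Icc]; omega))]
      simp
  -- evaluation of block sums at N = q k0 + p k0
  have hD2 : ∀ k : ℕ, ∑ n ∈ Finset.Icc 1 (q k0 + p k0), Cf (p k) (q k) n = 0 := by
    intro k
    have hk := hpq k
    have hk0 := hpq k0
    rw [hblock]
    rcases lt_trichotomy k k0 with h | h | h
    · have hc := chain k k0 h
      rw [Finset.sum_congr rfl (fun m hm => if_pos (by
          obtain ⟨hma, hmb⟩ := Finset.mem_Icc.mp hm
          rw [Finset.mem_Icc]; omega)),
        Finset.sum_congr rfl (fun m hm => if_pos (by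
          obtain ⟨hma, hmb⟩ := Finset.mem_Icc.mp hm
          rw [Finset.mem_Icc]; omega))]
      exact sub_self _
    · subst h
      rw [Finset.sum_congr rfl (fun m hm => if_pos (by
          obtain ⟨hma, hmb⟩ := Finset.mem_Icc.mp hm
          rw [Finset.mem_Icc]; omega)),
        Finset.sum_congr rfl (fun m hm => if_pos (by
          obtain ⟨hma, hmb⟩ := Finset.mem_Icc.mp hm
          rw [Finset.mem_Icc]; omega))]
      exact sub_self _
    · have hc := chain k0 k h
      rw [Finset.sum_congr rfl (fun m hm => if_neg (by
          obtain ⟨hma, hmb⟩ := Finset.mem_Icc.mp hm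
          rw [Finset.mem_Icc]; omega)),
        Finset.sum_congr rfl (fun m hm => if_neg (by
          obtain ⟨hma, hmb⟩ := Finset.mem_Icc.mp hm
          rw [Finset.mem_Icc]; omega))]
      simp
  -- first claim
  have claim1 : fourierPartialSum f (q k0 - 1) 0
      = a k0 * ∑ m ∈ Finset.Icc 1 (p k0), (1 : ℝ) / (m : ℝ) := by
    rw [hPS, hsumA]
    rw [tsum_congr (fun k => by rw [hD1 k])]
    rw [tsum_eq_single k0 (fun k hk => by rw [if_neg hk, mul_zero])]
    rw [if_pos rfl]
  have claim2 : fourierPartialSum f (q k0 + p k0) 0 = 0 := by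
    rw [hPS, hsumA]
    rw [tsum_congr (fun k => by rw [hD2 k, mul_zero])]
    exact tsum_zero
  refine ⟨claim1, claim2, ?_⟩
  rw [claim1]
  exact mul_le_mul_of_nonneg_left (log_le_sum (p k0) (le_of_lt (hpq k0).1))
    (le_of_lt (hapos k0))
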